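/- A matching complies with eligibility requirements, is non-wasteful, and respects priorities if and only if it is DA-induced, i.e., it is the outcome of the patient-proposing deferred acceptance algorithm for some profile of strict patient preferences over categories in which each patient ranks exactly the categories for which she is eligible above the empty set. -/

import Mathlib

open Finset

section ReserveSystem

variable {I C : Type*} [Fintype I] [DecidableEq I] [Fintype C] [DecidableEq C]

/-- Patient `i` is eligible for category `c` (i.e. `i π_c ∅`). Priorities are encoded by
injective score functions `pr c : Option I → ℕ`, where `none` stands for `∅` and a
higher score means a higher priority. -/
def Elig (pr : C → Option I → ℕ) (c : C) (i : I) : Prop :=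
  pr c none < pr c (some i)

instance (pr : C → Option I → ℕ) (c : C) (i : I) : Decidable (Elig pr c i) := by
  unfold Elig; infer_instance

/-- A matching assigns each patient a category or `none`, respecting capacities `r`. -/
def IsMatching (r : C → ℕ) (μ : I → Option C) : Prop :=
  ∀ c : C, (univ.filter (fun i => μ i = some c)).card ≤ r c

/-- `μ` complies with eligibility requirements. -/
def CompliesEligibility (pr : C → Option I → ℕ) (μ : I → Option C) : Prop :=
  ∀ i c, μ i = some c → Elig pr c i

/-- `μ` is non-wasteful. -/
def NonWasteful (pr : C → Option I → ℕ) (r : C → ℕ) (μ : I → Option C) : Prop :=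
  ∀ i c, Elig pr c i → μ i = none →
    (univ.filter (fun j => μ j = some c)).card = r c

/-- `μ` respects priorities. -/
def RespectsPriorities (pr : C → Option I → ℕ) (μ : I → Option C) : Prop :=
  ∀ i i' c, μ i = some c → μ i' = none → pr c (some i') < pr c (some i)

/-- Patient `i`'s proposal given the set `R` of categories that have rejected her so far:
her most preferred (w.r.t. her preference scores `up i`) eligible category outside `R`. -/
noncomputable def propose (pr : C → Option I → ℕ) (up : I → C → ℕ) (i : I)
    (R : Finset C) : Option C :=
  if h : (univ.filter (fun c => Elig pr c i ∧ c ∉ R)).Nonempty then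
    some (Classical.choose
      (Finset.exists_max_image (univ.filter (fun c => Elig pr c i ∧ c ∉ R)) (up i) h))
  else none

/-- One round of the patient-proposing deferred acceptance algorithm, acting on the
profile of rejection sets: every patient proposes to her best remaining eligible
category, and each category `c` tentatively keeps its `r c` highest-`π_c`-priority
applicants, permanently rejecting the rest. -/
noncomputable def daStep (pr : C → Option I → ℕ) (r : C → ℕ) (up : I → C → ℕ)
    (R : I → Finset C) : I → Finset C :=
  fun i =>
    match propose pr up i (R i) with
    | none => R i
    | some c =>
        if ((univ.filter (fun j => propose pr up j (R j) = some c ∧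
              pr c (some i) < pr c (some j))).card < r c) then R i
        else insert c (R i)

/-- The outcome of the patient-proposing deferred acceptance algorithm: rounds are
iterated until no rejection occurs (a fixed point is reached after at most
`|I| ⬝ |C|` rounds), and each patient is matched to her final tentative assignment. -/
noncomputable def daOutcome (pr : C → Option I → ℕ) (r : C → ℕ) (up : I → C → ℕ) :
    I → Option C :=
  fun i =>
    propose pr up i
      ((daStep pr r up)^[Fintype.card I * Fintype.card C + 1] (fun _ => ∅) i)


set_option linter.unusedSectionVars false
set_option linter.unusedVariables false


variable {pr : C → Option I → ℕ} {r : C → ℕ} {up : I → C → ℕ}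

lemma propose_spec {i : I} {R : Finset C} {c : C} (h : propose pr up i R = some c) :
    Elig pr c i ∧ c ∉ R ∧ ∀ c', Elig pr c' i → c' ∉ R → up i c' ≤ up i c := by
  unfold propose at h
  split at h
  · next hne =>
    obtain ⟨hmem, hmax⟩ := Classical.choose_spec (Finset.exists_max_image _ (up i) hne)
    injection h with h'
    rw [h'] at hmem hmax
    simp only [mem_filter, mem_univ, true_and] at hmem
    exact ⟨hmem.1, hmem.2, fun c' h1 h2 => hmax c' (by simp [h1, h2])⟩
  · exact absurd h (by simp)

lemma propose_eq_none_iff {i : I} {R : Finset C} :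
    propose pr up i R = none ↔ ∀ c, Elig pr c i → c ∈ R := by
  constructor
  · intro h c hc
    by_contra hcR
    unfold propose at h
    rw [dif_pos ⟨c, by simp [hc, hcR]⟩] at h
    exact Option.some_ne_none _ h
  · intro h
    unfold propose
    rw [dif_neg]
    rw [Finset.not_nonempty_iff_eq_empty, Finset.filter_eq_empty_iff]
    intro c _
    rintro ⟨h1, h2⟩
    exact h2 (h c h1)

lemma daStep_of_none {R : I → Finset C} {i : I} (hp : propose pr up i (R i) = none) :
    daStep pr r up R i = R i := by
  unfold daStep; rw [hp]

lemma daStep_of_lt {R : I → Finset C} {i : I} {c : C} (hp : propose pr up i (R i) = some c)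
    (hlt : (univ.filter (fun j => propose pr up j (R j) = some c ∧
      pr c (some i) < pr c (some j))).card < r c) :
    daStep pr r up R i = R i := by
  unfold daStep; rw [hp]; simp only [if_pos hlt]

lemma daStep_of_ge {R : I → Finset C} {i : I} {c : C} (hp : propose pr up i (R i) = some c)
    (hge : r c ≤ (univ.filter (fun j => propose pr up j (R j) = some c ∧
      pr c (some i) < pr c (some j))).card) :
    daStep pr r up R i = insert c (R i) := by
  unfold daStep; rw [hp]; simp only [if_neg (not_lt.2 hge)]

lemma subset_daStep (R : I → Finset C) (i : I) : R i ⊆ daStep pr r up R i := by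
  unfold daStep
  cases hp : propose pr up i (R i) with
  | none => exact subset_rfl
  | some c =>
    dsimp only
    split
    · exact subset_rfl
    · exact subset_insert _ _

lemma rank_card (S : Finset I) (f : I → ℕ) (hf : Set.InjOn f S) (k : ℕ) :
    min k S.card ≤ (S.filter (fun s => (S.filter (fun j => f s < f j)).card < k)).card := by
  set g : I → ℕ := fun s => (S.filter (fun j => f s < f j)).card with hg
  suffices h : min k S.card ≤ (S.filter (fun s => g s < k)).card from h
  have hmono : ∀ s ∈ S, ∀ s' ∈ S, f s < f s' → g s' < g s := by
    intro s hs s' hs' hlt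
    apply Finset.card_lt_card
    rw [Finset.ssubset_def]
    constructor
    · intro j hj; simp only [mem_filter] at hj ⊢; exact ⟨hj.1, hlt.trans hj.2⟩
    · intro hsub
      have h1 : s' ∈ S.filter (fun j => f s < f j) := by simp [hs', hlt]
      have h2 := hsub h1
      simp only [mem_filter] at h2
      exact lt_irrefl _ h2.2
  have hginj : Set.InjOn g S := by
    intro s hs s' hs' he
    by_contra hne
    have hfne : f s ≠ f s' := fun h => hne (hf hs hs' h)
    rcases lt_or_gt_of_ne hfne with h | h
    · have := hmono s hs s' hs' h; omega
    · have := hmono s' hs' s hs h; omega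
  have hglt : ∀ s ∈ S, g s < S.card := by
    intro s hs
    have hsub : S.filter (fun j => f s < f j) ⊆ S.erase s := by
      intro j hj; simp only [mem_filter] at hj
      exact mem_erase.2 ⟨fun h => by subst h; exact lt_irrefl _ hj.2, hj.1⟩
    calc g s ≤ (S.erase s).card := card_le_card hsub
      _ < S.card := card_erase_lt_of_mem hs
  have hsplit := Finset.card_filter_add_card_filter_not (s := S)
    (p := fun s => g s < k)
  have hB : (S.filter (fun s => ¬ g s < k)).card ≤ S.card - k := by
    have hcardimg : (S.filter (fun s => ¬ g s < k)).card
        = ((S.filter (fun s => ¬ g s < k)).image g).card :=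
      (Finset.card_image_of_injOn (hginj.mono (fun x hx => (mem_filter.1 hx).1))).symm
    rw [hcardimg]
    have himg : (S.filter (fun s => ¬ g s < k)).image g ⊆ Finset.Ico k S.card := by
      intro v hv; simp only [mem_image, mem_filter] at hv
      obtain ⟨s, ⟨hs, hk⟩, rfl⟩ := hv
      exact mem_Ico.2 ⟨by omega, hglt s hs⟩
    calc _ ≤ (Finset.Ico k S.card).card := card_le_card himg
      _ = S.card - k := Nat.card_Ico k S.card
  omega


lemma M_mono (hpr : ∀ c, Function.Injective (pr c)) (R : I → Finset C) (c : C) (v : ℕ) :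
    min (r c) ((univ.filter (fun j => propose pr up j (R j) = some c ∧
        v < pr c (some j))).card)
      ≤ (univ.filter (fun j => propose pr up j (daStep pr r up R j) = some c ∧
        v < pr c (some j))).card := by
  set S := univ.filter (fun j => propose pr up j (R j) = some c ∧ v < pr c (some j)) with hS
  set f : I → ℕ := fun j => pr c (some j) with hf
  have hinj : Set.InjOn f S := fun a _ b _ h => Option.some_injective I (hpr c h)
  have hrank := rank_card S f hinj (r c)
  have hsub : S.filter (fun s => (S.filter (fun j => f s < f j)).card < r c)
      ⊆ univ.filter (fun j => propose pr up j (daStep pr r up R j) = some c ∧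
        v < pr c (some j)) := by
    intro s hs
    simp only [mem_filter, mem_univ, true_and, hS] at hs
    obtain ⟨⟨hps, hvs⟩, hcard⟩ := hs
    have hset : S.filter (fun j => f s < f j)
        = univ.filter (fun j => propose pr up j (R j) = some c ∧
            pr c (some s) < pr c (some j)) := by
      ext j
      simp only [hS, mem_filter, mem_univ, true_and, hf]
      constructor
      · rintro ⟨⟨h1, _⟩, h3⟩; exact ⟨h1, h3⟩
      · rintro ⟨h1, h3⟩; exact ⟨⟨h1, lt_trans hvs h3⟩, h3⟩
    rw [hset] at hcard
    have hfix : daStep pr r up R s = R s := daStep_of_lt hps hcard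
    simp only [mem_filter, mem_univ, true_and]
    rw [hfix]
    exact ⟨hps, hvs⟩
  calc min (r c) S.card ≤ _ := hrank
    _ ≤ _ := card_le_card hsub

lemma exists_fix_iterate (pr : C → Option I → ℕ) (r : C → ℕ) (up : I → C → ℕ) :
    daStep pr r up ((daStep pr r up)^[Fintype.card I * Fintype.card C + 1] (fun _ => ∅))
      = (daStep pr r up)^[Fintype.card I * Fintype.card C + 1] (fun _ => ∅) := by
  set N := Fintype.card I * Fintype.card C with hN
  set F := daStep pr r up with hF
  set R : ℕ → I → Finset C := fun t => F^[t] (fun _ => ∅) with hR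
  have key : ∃ t ≤ N, F (R t) = R t := by
    by_contra hcon
    push_neg at hcon
    have hgrow : ∀ t, t ≤ N + 1 → t ≤ ∑ i : I, (R t i).card := by
      intro t
      induction t with
      | zero => intro _; exact Nat.zero_le _
      | succ t ih =>
        intro ht
        have hne := hcon t (by omega)
        have hle := ih (by omega)
        have hRt : R (t+1) = F (R t) := by
          rw [hR]; simp only [Function.iterate_succ_apply']
        have hlt : ∑ i : I, (R t i).card < ∑ i : I, (R (t+1) i).card := by
          apply Finset.sum_lt_sum
          · intro i _
            rw [hRt]
            exact card_le_card (subset_daStep (R t) i)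
          · obtain ⟨i, hi⟩ : ∃ i, F (R t) i ≠ R t i := by
              by_contra hc; push_neg at hc; exact hne (funext hc)
            refine ⟨i, mem_univ i, ?_⟩
            rw [hRt]
            exact card_lt_card (ssubset_of_ne_of_subset (Ne.symm hi) (subset_daStep (R t) i))
        omega
    have h1 := hgrow (N+1) le_rfl
    have h2 : ∑ i : I, (R (N+1) i).card ≤ ∑ _i : I, Fintype.card C := by
      apply Finset.sum_le_sum
      intro i _
      simpa using card_le_card (R (N+1) i).subset_univ
    simp only [Finset.sum_const, smul_eq_mul, Finset.card_univ] at h2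
    omega
  obtain ⟨t, ht, hfix⟩ := key
  have : R (N + 1) = R t := by
    have hdecomp : N + 1 = (N + 1 - t) + t := by omega
    rw [hR]
    show F^[N+1] (fun _ => ∅) = F^[t] (fun _ => ∅)
    rw [hdecomp, Function.iterate_add_apply]
    exact Function.iterate_fixed hfix _
  show F (R (N+1)) = R (N+1)
  rw [this, hfix]

lemma exists_transition {α : Type*} (f : ℕ → Set α) (c : α) :
    ∀ T, c ∉ f 0 → c ∈ f T → ∃ t < T, c ∉ f t ∧ c ∈ f (t+1) := by
  intro T
  induction T with
  | zero => intro h0 hT; exact absurd hT h0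
  | succ T ih =>
    intro h0 hT
    by_cases h : c ∈ f T
    · obtain ⟨t, h1, h2, h3⟩ := ih h0 h
      exact ⟨t, by omega, h2, h3⟩
    · exact ⟨T, by omega, h, hT⟩

lemma rejection_of_insert {R : I → Finset C} {i : I} {c : C}
    (h1 : c ∉ R i) (h2 : c ∈ daStep pr r up R i) :
    propose pr up i (R i) = some c ∧
      r c ≤ (univ.filter (fun j => propose pr up j (R j) = some c ∧
        pr c (some i) < pr c (some j))).card := by
  unfold daStep at h2
  cases hp : propose pr up i (R i) with
  | none => rw [hp] at h2; exact absurd h2 h1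
  | some c' =>
    rw [hp] at h2
    dsimp only at h2
    split at h2
    · exact absurd h2 h1
    · next hcond =>
      rcases mem_insert.1 h2 with heq | hmem
      · subst heq; exact ⟨rfl, not_lt.1 hcond⟩
      · exact absurd hmem h1


lemma final_reject (hpr : ∀ c, Function.Injective (pr c)) {i : I} {c : C} {T : ℕ}
    (h : c ∈ (daStep pr r up)^[T] (fun _ => ∅) i) :
    r c ≤ (univ.filter (fun j =>
      propose pr up j ((daStep pr r up)^[T] (fun _ => ∅) j) = some c ∧
        pr c (some i) < pr c (some j))).card := by
  obtain ⟨t, htT, hnot, hmem⟩ :=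
    exists_transition (fun t => ((daStep pr r up)^[t] (fun _ => ∅) i : Set C)) c T
      (by simp) h
  rw [show (t+1) = t + 1 from rfl, Function.iterate_succ_apply'] at hmem
  obtain ⟨hp, hge⟩ := rejection_of_insert hnot hmem
  have hprop : ∀ d, r c ≤ (univ.filter (fun j =>
      propose pr up j ((daStep pr r up)^[t + d] (fun _ => ∅) j) = some c ∧
        pr c (some i) < pr c (some j))).card := by
    intro d
    induction d with
    | zero => simpa using hge
    | succ d ih =>
      have hmm := M_mono (r := r) (up := up) hpr
        ((daStep pr r up)^[t + d] (fun _ => ∅)) c (pr c (some i))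
      have hit : (daStep pr r up)^[t + (d+1)] (fun _ => ∅)
          = daStep pr r up ((daStep pr r up)^[t + d] (fun _ => ∅)) := by
        rw [show t + (d+1) = (t + d) + 1 by omega, Function.iterate_succ_apply']
      rw [hit]
      omega
  have := hprop (T - t)
  rwa [show t + (T - t) = T by omega] at this


variable {μ : I → Option C}

lemma propose_matched (hCE : CompliesEligibility pr μ)
    (hupinj : ∀ i, Function.Injective (up i))
    (hbig : ∀ i c, μ i = some c → ∀ c', Elig pr c' i → up i c' ≤ up i c)
    {i : I} {c : C} (h : μ i = some c) :
    propose pr up i ∅ = some c := by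
  have helig : Elig pr c i := hCE i c h
  cases hp : propose pr up i ∅ with
  | none =>
    rw [propose_eq_none_iff] at hp
    exact absurd (hp c helig) (notMem_empty c)
  | some m =>
    obtain ⟨hm1, _, hm3⟩ := propose_spec hp
    have h1 : up i c ≤ up i m := hm3 c helig (notMem_empty c)
    have h2 : up i m ≤ up i c := hbig i c h m hm1
    have : m = c := hupinj i (le_antisymm h2 h1)
    rw [this]

lemma forward_invariant (hpr : ∀ c, Function.Injective (pr c))
    (hμ : IsMatching r μ) (hCE : CompliesEligibility pr μ) (hNW : NonWasteful pr r μ)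
    (hRP : RespectsPriorities pr μ)
    (hupinj : ∀ i, Function.Injective (up i))
    (hbig : ∀ i c, μ i = some c → ∀ c', Elig pr c' i → up i c' ≤ up i c) :
    ∀ t (i : I),
      ((daStep pr r up)^[t] (fun _ => ∅) i ⊆ univ.filter (fun c => Elig pr c i)) ∧
      (μ i ≠ none → (daStep pr r up)^[t] (fun _ => ∅) i = ∅) ∧
      (μ i = none → min t (univ.filter (fun c => Elig pr c i)).card
        ≤ ((daStep pr r up)^[t] (fun _ => ∅) i).card) := by
  intro t
  induction t with
  | zero =>
    intro i
    simp
  | succ t ih =>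
    have hstep : (daStep pr r up)^[t+1] (fun _ => ∅)
        = daStep pr r up ((daStep pr r up)^[t] (fun _ => ∅)) :=
      Function.iterate_succ_apply' _ _ _
    set R : I → Finset C := (daStep pr r up)^[t] (fun _ => ∅) with hR
    -- every matched patient proposes to her match
    have hpm : ∀ j c, μ j = some c → propose pr up j (R j) = some c := by
      intro j c hj
      have hRj : R j = ∅ := (ih j).2.1 (by rw [hj]; simp)
      rw [hRj]
      exact propose_matched hCE hupinj hbig hj
    -- matched patients are never rejected
    have hmatched : ∀ i c, μ i = some c → daStep pr r up R i = ∅ := by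
      intro i c hi
      have hRi : R i = ∅ := (ih i).2.1 (by rw [hi]; simp)
      have hp : propose pr up i (R i) = some c := hpm i c hi
      have hsub : univ.filter (fun j => propose pr up j (R j) = some c ∧
          pr c (some i) < pr c (some j)) ⊆ (univ.filter (fun j => μ j = some c)).erase i := by
        intro j hj
        simp only [mem_filter, mem_univ, true_and] at hj
        obtain ⟨hpj, hlt⟩ := hj
        refine mem_erase.2 ⟨?_, ?_⟩
        · rintro rfl; exact lt_irrefl _ hlt
        · cases hj2 : μ j with
          | none => exact absurd (hRP i j c hi hj2) (by omega)
          | some c' =>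
            have := hpm j c' hj2
            rw [this] at hpj
            injection hpj with h'
            simp [mem_filter, hj2, h']
      have hiin : i ∈ univ.filter (fun j => μ j = some c) := by simp [hi]
      have h1 : 1 ≤ (univ.filter (fun j => μ j = some c)).card := card_pos.2 ⟨i, hiin⟩
      have h2 := hμ c
      have h3 := card_le_card hsub
      rw [card_erase_of_mem hiin] at h3
      have hlt : (univ.filter (fun j => propose pr up j (R j) = some c ∧
          pr c (some i) < pr c (some j))).card < r c := by omega
      rw [daStep_of_lt hp hlt, hRi]
    intro i
    rw [hstep]
    cases hi : μ i with
    | some c =>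
      have := hmatched i c hi
      rw [this]
      exact ⟨empty_subset _, fun _ => rfl, fun h => absurd h (Option.some_ne_none c)⟩
    | none =>
      have hsubR : R i ⊆ univ.filter (fun c => Elig pr c i) := (ih i).1
      have hcardR : min t (univ.filter (fun c => Elig pr c i)).card ≤ (R i).card :=
        (ih i).2.2 hi
      by_cases hfull : ∀ c, Elig pr c i → c ∈ R i
      · have hpn : propose pr up i (R i) = none := propose_eq_none_iff.2 hfull
        rw [daStep_of_none hpn]
        have heq : R i = univ.filter (fun c => Elig pr c i) := by
          apply Finset.Subset.antisymm hsubR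
          intro c hc
          simp only [mem_filter, mem_univ, true_and] at hc
          exact hfull c hc
        refine ⟨hsubR, fun h => absurd rfl h, fun _ => ?_⟩
        rw [heq]
        exact min_le_right _ _
      · push_neg at hfull
        obtain ⟨c0, hc0, hc0R⟩ := hfull
        obtain ⟨c, hp⟩ : ∃ c, propose pr up i (R i) = some c := by
          cases hq : propose pr up i (R i) with
          | none =>
            rw [propose_eq_none_iff] at hq
            exact absurd (hq c0 hc0) hc0R
          | some c => exact ⟨c, rfl⟩
        obtain ⟨helig, hcR, _⟩ := propose_spec hp
        have hsubM : univ.filter (fun j => μ j = some c) ⊆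
            univ.filter (fun j => propose pr up j (R j) = some c ∧
              pr c (some i) < pr c (some j)) := by
          intro j hj
          simp only [mem_filter, mem_univ, true_and] at hj ⊢
          exact ⟨hpm j c hj, hRP j i c hj hi⟩
        have hcount : r c ≤ (univ.filter (fun j => propose pr up j (R j) = some c ∧
            pr c (some i) < pr c (some j))).card := by
          rw [← hNW i c helig hi]
          exact card_le_card hsubM
        rw [daStep_of_ge hp hcount]
        refine ⟨?_, fun h => absurd rfl h, fun _ => ?_⟩
        · intro x hx
          rcases mem_insert.1 hx with rfl | hx'
          · simp [helig]
          · exact hsubR hx'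
        · rw [card_insert_of_notMem hcR]
          omega

lemma forward_outcome (hpr : ∀ c, Function.Injective (pr c))
    (hμ : IsMatching r μ) (hCE : CompliesEligibility pr μ) (hNW : NonWasteful pr r μ)
    (hRP : RespectsPriorities pr μ)
    (hupinj : ∀ i, Function.Injective (up i))
    (hbig : ∀ i c, μ i = some c → ∀ c', Elig pr c' i → up i c' ≤ up i c)
    (hne : Nonempty I) :
    μ = daOutcome pr r up := by
  have hinv := forward_invariant hpr hμ hCE hNW hRP hupinj hbig
  set K := Fintype.card C with hK
  -- at time K, each unmatched patient's rejection set is her full eligibility set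
  have hfull : ∀ i, μ i = none →
      (daStep pr r up)^[K] (fun _ => ∅) i = univ.filter (fun c => Elig pr c i) := by
    intro i hi
    have h1 := (hinv K i).1
    have h2 := (hinv K i).2.2 hi
    have h3 : (univ.filter (fun c => Elig pr c i)).card ≤ K := by
      rw [hK]; simpa using card_le_card (univ.filter (fun c => Elig pr c i)).subset_univ
    apply Finset.eq_of_subset_of_card_le h1
    omega
  -- K is a fixed point
  have hfix : daStep pr r up ((daStep pr r up)^[K] (fun _ => ∅))
      = (daStep pr r up)^[K] (fun _ => ∅) := by
    funext i
    have hstep : daStep pr r up ((daStep pr r up)^[K] (fun _ => ∅)) i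
        = (daStep pr r up)^[K+1] (fun _ => ∅) i := by
      rw [Function.iterate_succ_apply']
    rw [hstep]
    cases hi : μ i with
    | some c =>
      rw [(hinv (K+1) i).2.1 (by rw [hi]; simp), (hinv K i).2.1 (by rw [hi]; simp)]
    | none =>
      have hA := hfull i hi
      have h1 := (hinv (K+1) i).1
      have h2 := (hinv (K+1) i).2.2 hi
      have h3 : (univ.filter (fun c => Elig pr c i)).card ≤ K := by
        rw [hK]; simpa using card_le_card (univ.filter (fun c => Elig pr c i)).subset_univ
      have : (daStep pr r up)^[K+1] (fun _ => ∅) i = univ.filter (fun c => Elig pr c i) := by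
        apply Finset.eq_of_subset_of_card_le h1
        omega
      rw [this, hA]
  have hIT : (daStep pr r up)^[Fintype.card I * Fintype.card C + 1] (fun _ => ∅)
      = (daStep pr r up)^[K] (fun _ => ∅) := by
    have hcard : 1 ≤ Fintype.card I := Fintype.card_pos_iff.2 hne
    have hdec : Fintype.card I * Fintype.card C + 1
        = (Fintype.card I * Fintype.card C + 1 - K) + K := by
      have hCC : Fintype.card C ≤ Fintype.card I * Fintype.card C :=
        Nat.le_mul_of_pos_left _ hcard
      omega
    rw [hdec, Function.iterate_add_apply]
    exact Function.iterate_fixed hfix _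
  funext i
  rw [daOutcome, hIT]
  cases hi : μ i with
  | some c =>
    rw [(hinv K i).2.1 (by rw [hi]; simp)]
    exact (propose_matched hCE hupinj hbig hi).symm
  | none =>
    rw [hfull i hi]
    symm
    rw [propose_eq_none_iff]
    intro c hc
    simp [hc]



/-- Theorem 2: a matching satisfies the three axioms iff it is DA-induced, i.e., it is
the deferred acceptance outcome for some profile of strict patient preferences over
categories (encoded by injective score functions `up i`, each patient ranking exactly
her eligible categories above the empty set). -/
theorem da_characterization
    (pr : C → Option I → ℕ) (hpr : ∀ c, Function.Injective (pr c))
    (r : C → ℕ) (μ : I → Option C) (hμ : IsMatching r μ) :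
    (CompliesEligibility pr μ ∧ NonWasteful pr r μ ∧ RespectsPriorities pr μ) ↔
      ∃ up : I → C → ℕ, (∀ i, Function.Injective (up i)) ∧ μ = daOutcome pr r up := by
  constructor
  · rintro ⟨hCE, hNW, hRP⟩
    rcases isEmpty_or_nonempty I with hI | hI
    · exact ⟨fun _ _ => 0, fun i => (hI.false i).elim, funext fun i => (hI.false i).elim⟩
    · set e := Fintype.equivFin C with he
      refine ⟨fun i c => (if μ i = some c then Fintype.card C else 0) + (e c : ℕ), ?_, ?_⟩
      all_goals
        have hupinj : ∀ i, Function.Injective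
            (fun c => (if μ i = some c then Fintype.card C else 0) + (e c : ℕ)) := by
          intro i c c' h
          dsimp only at h
          by_cases h1 : μ i = some c <;> by_cases h2 : μ i = some c'
          · exact Option.some_injective C (h1.symm.trans h2)
          · rw [if_pos h1, if_neg h2] at h; have := (e c').isLt; omega
          · rw [if_neg h1, if_pos h2] at h; have := (e c).isLt; omega
          · rw [if_neg h1, if_neg h2] at h
            simp only [zero_add] at h
            exact e.injective (Fin.val_injective h)
      · exact hupinj
      · have hbig : ∀ i c, μ i = some c → ∀ c', Elig pr c' i →
            (fun c => (if μ i = some c then Fintype.card C else 0) + (e c : ℕ)) c'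
              ≤ (fun c => (if μ i = some c then Fintype.card C else 0) + (e c : ℕ)) c := by
          intro i c h c' _
          dsimp only
          by_cases h' : μ i = some c'
          · have hcc : c = c' := Option.some_injective C (h.symm.trans h')
            exact le_of_eq (by rw [hcc])
          · rw [if_neg h', if_pos h]
            have := (e c').isLt
            omega
        exact forward_outcome hpr hμ hCE hNW hRP hupinj hbig hI
  · rintro ⟨up, hupinj, hμout⟩
    have hout : ∀ i, μ i = propose pr up i
        ((daStep pr r up)^[Fintype.card I * Fintype.card C + 1] (fun _ => ∅) i) := by
      intro i; rw [hμout]; rfl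
    refine ⟨?_, ?_, ?_⟩
    · intro i c h
      rw [hout i] at h
      exact (propose_spec h).1
    · intro i c helig hnone
      rw [hout i, propose_eq_none_iff] at hnone
      have hge := final_reject (r := r) hpr (hnone c helig)
      have hsub : univ.filter (fun j =>
          propose pr up j ((daStep pr r up)^[Fintype.card I * Fintype.card C + 1]
            (fun _ => ∅) j) = some c ∧ pr c (some i) < pr c (some j))
          ⊆ univ.filter (fun j => μ j = some c) := by
        intro j hj
        simp only [mem_filter, mem_univ, true_and] at hj ⊢
        rw [hout j]; exact hj.1
      exact le_antisymm (hμ c) (hge.trans (card_le_card hsub))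
    · intro i i' c hi hi'
      have helig : Elig pr c i := by
        rw [hout i] at hi; exact (propose_spec hi).1
      by_cases h' : Elig pr c i'
      · rw [hout i', propose_eq_none_iff] at hi'
        have hge := final_reject (r := r) hpr (hi' c h')
        have hsub : univ.filter (fun j =>
            propose pr up j ((daStep pr r up)^[Fintype.card I * Fintype.card C + 1]
              (fun _ => ∅) j) = some c ∧ pr c (some i') < pr c (some j))
            ⊆ univ.filter (fun j => μ j = some c) := by
          intro j hj
          simp only [mem_filter, mem_univ, true_and] at hj ⊢
          rw [hout j]; exact hj.1
        have heq := Finset.eq_of_subset_of_card_le hsub ((hμ c).trans hge)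
        have hiM : i ∈ univ.filter (fun j =>
            propose pr up j ((daStep pr r up)^[Fintype.card I * Fintype.card C + 1]
              (fun _ => ∅) j) = some c ∧ pr c (some i') < pr c (some j)) := by
          rw [heq]; simp [hi]
        simp only [mem_filter, mem_univ, true_and] at hiM
        exact hiM.2
      · have h1 : pr c (some i') ≤ pr c none := not_lt.1 h'
        have h2 : pr c (some i') ≠ pr c none := fun h => Option.some_ne_none _ (hpr c h)
        exact lt_of_le_of_ne h1 h2 |>.trans helig


end ReserveSystem
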